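/- Feferman's theorem: A partial applicative structure A is combinatory complete if and only if there exist elements k, s ∈ A such that for all a, b, c ∈ A: k·a is defined; (k·a)·b is defined and equals a; s·a is defined; (s·a)·b is defined; and ((s·a)·b)·c ≃ (a·c)·(b·c), where ≃ is Kleene equality of partial terms (either both sides are undefined, or both are defined and equal). -/

import Mathlib

/-! Feferman's theorem: a partial applicative structure is combinatory complete
iff it has combinators `k` and `s`. -/

/-- Strict application of partial elements: for `papp app x y` to be defined,
both `x` and `y` must be defined. -/
def papp {A : Type*} (app : A → A → Part A) (x y : Part A) : Part A :=
  x.bind fun a => y.bind fun b => app a b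

/-- Terms over a partial applicative structure `A`: elements of `A`,
variables (indexed by `ℕ`), and application. -/
inductive PTerm (A : Type*) where
  | cnst : A → PTerm A
  | var : ℕ → PTerm A
  | ap : PTerm A → PTerm A → PTerm A

/-- Strict evaluation of a term under a valuation `ρ` of the variables
(this in particular evaluates the closed term obtained by substituting
`ρ i` for the variable `i`). -/
def PTerm.eval {A : Type*} (app : A → A → Part A) (ρ : ℕ → A) : PTerm A → Part A
  | .cnst a => Part.some a
  | .var n => Part.some (ρ n)
  | .ap t s => papp app (t.eval app ρ) (s.eval app ρ)

/-- All variables occurring in the term are `< m`. -/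
def PTerm.VarsLt {A : Type*} : PTerm A → ℕ → Prop
  | .cnst _, _ => True
  | .var n, m => n < m
  | .ap t s, m => t.VarsLt m ∧ s.VarsLt m

/-- The left-associated application `b · a₁ · ⋯ · aₙ` for a list `[a₁, …, aₙ]`. -/
def lapp {A : Type*} (app : A → A → Part A) (b : A) (as : List A) : Part A :=
  as.foldl (fun p a => p.bind fun x => app x a) (Part.some b)

/-- A partial applicative structure is combinatory complete if for every term
`t(x₁,…,xₙ,x)` (with variables among the first `n+1` variables, the last one
playing the role of `x`) there is `b` such that for all `a₁,…,aₙ,a`: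
`b·a₁·⋯·aₙ` is defined, and `b·a₁·⋯·aₙ·a ≃ t(a₁,…,aₙ,a)` (Kleene equality). -/
def CombComplete {A : Type*} (app : A → A → Part A) : Prop :=
  ∀ (n : ℕ) (t : PTerm A), t.VarsLt (n + 1) →
    ∃ b : A, ∀ ρ : ℕ → A,
      (lapp app b ((List.range n).map ρ)).Dom ∧
      lapp app b ((List.range (n + 1)).map ρ) = t.eval app ρ

-- AUX START
namespace FefermanAux

variable {A : Type*} (app : A → A → Part A)

lemma papp_some_some (a b : A) : papp app (Part.some a) (Part.some b) = app a b := by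
  simp [papp]

lemma papp_some_left (a : A) (y : Part A) : papp app (Part.some a) y = y.bind (app a) := by
  simp [papp]

lemma papp_some_right (x : Part A) (a : A) :
    papp app x (Part.some a) = x.bind fun p => app p a := by
  simp [papp]

lemma lapp_append_single (b : A) (as : List A) (a : A) :
    lapp app b (as ++ [a]) = papp app (lapp app b as) (Part.some a) := by
  simp [lapp, List.foldl_append, papp]

lemma lapp_single (b a : A) : lapp app b [a] = app b a := by
  simp [lapp]

lemma dom_of_bind_dom {x : Part A} {f : A → Part A} (h : (x.bind f).Dom) : x.Dom := by
  obtain ⟨a, ha, _⟩ := Part.mem_bind_iff.mp (Part.get_mem h)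
  exact Part.dom_iff_mem.mpr ⟨a, ha⟩

/-- Bracket abstraction of variable `i`. -/
def absT (k s : A) (i : ℕ) : PTerm A → PTerm A
  | .cnst a => .ap (.cnst k) (.cnst a)
  | .var j => if j = i then .ap (.ap (.cnst s) (.cnst k)) (.cnst k) else .ap (.cnst k) (.var j)
  | .ap u v => .ap (.ap (.cnst s) (absT k s i u)) (absT k s i v)

lemma eval_congr {ρ ρ' : ℕ → A} : ∀ (t : PTerm A) (m : ℕ), t.VarsLt m →
    (∀ j < m, ρ j = ρ' j) → t.eval app ρ = t.eval app ρ'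
  | .cnst a, _, _, _ => rfl
  | .var j, m, h, hρ => by simp [PTerm.eval, hρ j h]
  | .ap u v, m, h, hρ => by
      simp only [PTerm.eval]
      rw [eval_congr u m h.1 hρ, eval_congr v m h.2 hρ]

lemma absT_varsLt (k s : A) : ∀ (t : PTerm A) (i : ℕ), t.VarsLt (i + 1) →
    (absT k s i t).VarsLt i
  | .cnst a, i, _ => ⟨trivial, trivial⟩
  | .var j, i, h => by
      by_cases hj : j = i
      · simp [absT, hj, PTerm.VarsLt]
      · have : j < i := lt_of_le_of_ne (Nat.lt_succ_iff.mp h) hj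
        simp [absT, hj, PTerm.VarsLt, this]
  | .ap u v, i, h =>
      ⟨⟨trivial, absT_varsLt k s u i h.1⟩, absT_varsLt k s v i h.2⟩

section Laws

variable (k s : A)
variable (hk : ∀ a, (app k a).Dom)
variable (hk2 : ∀ a b, papp app (app k a) (Part.some b) = Part.some a)
variable (hs : ∀ a, (app s a).Dom)
variable (hs2 : ∀ a b, (papp app (app s a) (Part.some b)).Dom)
variable (hs3 : ∀ a b c, papp app (papp app (app s a) (Part.some b)) (Part.some c) =
          papp app (app a c) (app b c))

include hk hs2 in
lemma absT_eval_dom : ∀ (t : PTerm A) (i : ℕ) (ρ : ℕ → A),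
    ∃ e : A, (absT k s i t).eval app ρ = Part.some e
  | .cnst a, i, ρ => by
      refine ⟨(app k a).get (hk a), ?_⟩
      simp only [absT, PTerm.eval, papp_some_some]
      exact (Part.some_get (hk a)).symm
  | .var j, i, ρ => by
      by_cases hj : j = i
      · have h := hs2 k k
        refine ⟨(papp app (app s k) (Part.some k)).get h, ?_⟩
        simp only [absT, if_pos hj, PTerm.eval, papp_some_some]
        exact (Part.some_get h).symm
      · refine ⟨(app k (ρ j)).get (hk (ρ j)), ?_⟩
        simp only [absT, if_neg hj, PTerm.eval, papp_some_some]
        exact (Part.some_get (hk (ρ j))).symm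
  | .ap u v, i, ρ => by
      obtain ⟨eu, hu⟩ := absT_eval_dom u i ρ
      obtain ⟨ev, hv⟩ := absT_eval_dom v i ρ
      have h := hs2 eu ev
      refine ⟨(papp app (app s eu) (Part.some ev)).get h, ?_⟩
      simp only [absT, PTerm.eval, hu, hv, papp_some_some]
      exact (Part.some_get h).symm

include hk hk2 hs2 hs3 in
lemma absT_eval_app : ∀ (t : PTerm A) (i : ℕ) (ρ : ℕ → A) (a : A),
    papp app ((absT k s i t).eval app ρ) (Part.some a) =
      t.eval app (Function.update ρ i a)
  | .cnst c, i, ρ, a => by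
      simp only [absT, PTerm.eval, papp_some_some]
      exact hk2 c a
  | .var j, i, ρ, a => by
      by_cases hj : j = i
      · subst hj
        simp only [absT, if_pos rfl, if_true, PTerm.eval, papp_some_some, Function.update_self]
        rw [hs3 k k a]
        obtain ⟨e, he⟩ := Part.dom_iff_mem.mp (hk a)
        have hke : app k a = Part.some e := Part.eq_some_iff.mpr he
        rw [hke, papp_some_some]
        have := hk2 a e
        rwa [hke, papp_some_some] at this
      · simp only [absT, if_neg hj, PTerm.eval, papp_some_some, Function.update_of_ne hj]
        exact hk2 (ρ j) a
  | .ap u v, i, ρ, a => by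
      obtain ⟨eu, hu⟩ := absT_eval_dom app k s hk hs2 u i ρ
      obtain ⟨ev, hv⟩ := absT_eval_dom app k s hk hs2 v i ρ
      have ihu := absT_eval_app u i ρ a
      have ihv := absT_eval_app v i ρ a
      rw [hu, papp_some_some] at ihu
      rw [hv, papp_some_some] at ihv
      simp only [absT, PTerm.eval, hu, hv, papp_some_some]
      rw [hs3 eu ev a, ihu, ihv]

include hk hk2 hs2 hs3 in
lemma main_ind : ∀ (n : ℕ) (t : PTerm A), t.VarsLt (n + 1) →
    ∃ b : A, ∀ ρ : ℕ → A,
      (lapp app b ((List.range n).map ρ)).Dom ∧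
      lapp app b ((List.range (n + 1)).map ρ) = t.eval app ρ := by
  intro n
  induction n with
  | zero =>
      intro t ht
      obtain ⟨b, hb⟩ := absT_eval_dom app k s hk hs2 t 0 (fun _ => k)
      refine ⟨b, fun ρ => ?_⟩
      have hcl : (absT k s 0 t).eval app ρ = Part.some b := by
        rw [eval_congr app (absT k s 0 t) 0 (absT_varsLt k s t 0 ht)
          (fun j hj => absurd hj (Nat.not_lt_zero j))]
        exact hb
      constructor
      · simp [lapp]
      · have : lapp app b ((List.range 1).map ρ) = app b (ρ 0) := by
          rw [show List.range 1 = [0] from rfl, List.map_singleton, lapp_single]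
        rw [this, ← papp_some_some app b (ρ 0), ← hcl,
          absT_eval_app app k s hk hk2 hs2 hs3 t 0 ρ (ρ 0), Function.update_eq_self]
  | succ n ih =>
      intro t ht
      obtain ⟨b, hb⟩ := ih (absT k s (n + 1) t) (absT_varsLt k s t (n + 1) ht)
      refine ⟨b, fun ρ => ?_⟩
      obtain ⟨e, he⟩ := absT_eval_dom app k s hk hs2 t (n + 1) ρ
      have h1 : lapp app b ((List.range (n + 1)).map ρ) =
          (absT k s (n + 1) t).eval app ρ := (hb ρ).2
      constructor
      · rw [h1, he]; trivial
      · have hr : (List.range (n + 2)).map ρ =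
            (List.range (n + 1)).map ρ ++ [ρ (n + 1)] := by
          rw [List.range_succ, List.map_append]; rfl
        rw [hr, lapp_append_single, h1,
          absT_eval_app app k s hk hk2 hs2 hs3 t (n + 1) ρ (ρ (n + 1)),
          Function.update_eq_self]

end Laws
end FefermanAux


open FefermanAux

/-- Feferman's theorem: a pas `A` is combinatory complete iff it has elements
`k` and `s` such that for all `a, b, c`: `k·a↓`, `k·a·b = a`, `s·a↓`, `s·a·b↓`,
and `s·a·b·c ≃ (a·c)·(b·c)`. -/
theorem feferman {A : Type*} (app : A → A → Part A) :
    CombComplete app ↔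
      ∃ k s : A, ∀ a b c : A,
        (app k a).Dom ∧
        papp app (app k a) (Part.some b) = Part.some a ∧
        (app s a).Dom ∧
        (papp app (app s a) (Part.some b)).Dom ∧
        papp app (papp app (app s a) (Part.some b)) (Part.some c) =
          papp app (app a c) (app b c) := by
  constructor
  · intro h
    obtain ⟨k, hk⟩ := h 1 (.var 0) (by simp [PTerm.VarsLt])
    obtain ⟨s, hs⟩ := h 2 (.ap (.ap (.var 0) (.var 2)) (.ap (.var 1) (.var 2)))
      (by simp [PTerm.VarsLt])
    refine ⟨k, s, fun a b c => ?_⟩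
    obtain ⟨hkd, hke⟩ := hk (fun i => if i = 0 then a else b)
    obtain ⟨hsd, hse⟩ := hs (fun i => if i = 0 then a else if i = 1 then b else c)
    rw [show (List.range 1).map (fun i => if i = 0 then a else b) = [a] from rfl] at hkd
    rw [show (List.range 2).map (fun i => if i = 0 then a else b) = [a, b] from rfl] at hke
    rw [show (List.range 2).map (fun i => if i = 0 then a else if i = 1 then b else c)
      = [a, b] from rfl] at hsd
    rw [show (List.range 3).map (fun i => if i = 0 then a else if i = 1 then b else c)
      = [a, b, c] from rfl] at hse
    have e1 : lapp app k [a] = app k a := lapp_single app k a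
    have e2 : lapp app k [a, b] = papp app (app k a) (Part.some b) := by
      show lapp app k ([a] ++ [b]) = _
      rw [lapp_append_single, e1]
    have e3 : lapp app s [a, b] = papp app (app s a) (Part.some b) := by
      show lapp app s ([a] ++ [b]) = _
      rw [lapp_append_single, lapp_single]
    have e4 : lapp app s [a, b, c] =
        papp app (papp app (app s a) (Part.some b)) (Part.some c) := by
      show lapp app s ([a, b] ++ [c]) = _
      rw [lapp_append_single, e3]
    rw [e1] at hkd
    rw [e2] at hke
    rw [e3] at hsd
    rw [e4] at hse
    simp only [PTerm.eval, papp_some_some] at hke hse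
    refine ⟨hkd, hke, ?_, hsd, hse⟩
    rw [papp_some_right] at hsd
    exact dom_of_bind_dom hsd
  · rintro ⟨k, s, H⟩
    intro n t ht
    exact main_ind app k s (fun a => (H a a a).1) (fun a b => (H a b a).2.1)
      (fun a b => (H a b a).2.2.2.1) (fun a b c => (H a b c).2.2.2.2) n t ht
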